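/- The deflection angle function is strictly monotone and bounded by arccos R. Precisely: let 0 < R < 1 and define β̂(β) = arcsin(sin β / R) − β for β ∈ [−arcsin R, arcsin R]. Then β̂ is strictly increasing on [−arcsin R, arcsin R], and |β̂(β)| ≤ arccos R for all β in this interval. -/

import Mathlib

open Real Set

/-- The deflection angle function `β̂(β) = arcsin (sin β / R) − β` is strictly
increasing on `[−arcsin R, arcsin R]` and bounded in absolute value by
`arccos R` there. -/
theorem deflection_angle_monotone_bounded (R : ℝ) (hR0 : 0 < R) (hR1 : R < 1) :
    StrictMonoOn (fun β : ℝ => Real.arcsin (Real.sin β / R) - β)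
      (Set.Icc (-Real.arcsin R) (Real.arcsin R)) ∧
    ∀ β ∈ Set.Icc (-Real.arcsin R) (Real.arcsin R),
      |Real.arcsin (Real.sin β / R) - β| ≤ Real.arccos R := by
  have hR1' : Real.arcsin R < π / 2 := Real.arcsin_lt_pi_div_two.mpr hR1
  have hsinarcsin : Real.sin (Real.arcsin R) = R :=
    Real.sin_arcsin (by linarith) hR1.le
  have hmono : StrictMonoOn (fun β : ℝ => Real.arcsin (Real.sin β / R) - β)
      (Set.Icc (-Real.arcsin R) (Real.arcsin R)) := by
    apply strictMonoOn_of_deriv_pos (convex_Icc _ _)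
    · exact ((Real.continuous_arcsin.comp
        (Real.continuous_sin.div_const R)).sub continuous_id).continuousOn
    · intro β hβ
      rw [interior_Icc] at hβ
      obtain ⟨hβ1, hβ2⟩ := hβ
      have hb2 : β < π / 2 := lt_trans hβ2 hR1'
      have hb1 : -(π / 2) < β := by linarith
      have hs2 : Real.sin β < R := by
        calc Real.sin β < Real.sin (Real.arcsin R) :=
              Real.sin_lt_sin_of_lt_of_le_pi_div_two (by linarith) hR1'.le hβ2
        _ = R := hsinarcsin
      have hs1 : -R < Real.sin β := by
        have h := Real.sin_lt_sin_of_lt_of_le_pi_div_two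
          (x := -Real.arcsin R) (y := β) (by linarith) hb2.le hβ1
        rwa [Real.sin_neg, hsinarcsin] at h
      have hR0' : (R : ℝ) ≠ 0 := ne_of_gt hR0
      have hx1 : Real.sin β / R ≠ -1 := by
        intro h; rw [div_eq_iff hR0'] at h; nlinarith
      have hx2 : Real.sin β / R ≠ 1 := by
        intro h; rw [div_eq_iff hR0'] at h; nlinarith
      have hD : HasDerivAt (fun β : ℝ => Real.arcsin (Real.sin β / R) - β)
          (1 / Real.sqrt (1 - (Real.sin β / R) ^ 2) * (Real.cos β / R) - 1) β :=
        by have := ((Real.hasDerivAt_arcsin hx1 hx2).comp β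
          ((Real.hasDerivAt_sin β).div_const R)).sub (hasDerivAt_id β); exact this
      rw [hD.deriv]
      have hcos : 0 < Real.cos β := Real.cos_pos_of_mem_Ioo ⟨hb1, hb2⟩
      have hposq : 0 < R ^ 2 - Real.sin β ^ 2 := by nlinarith
      have hsqrtpos : 0 < Real.sqrt (R ^ 2 - Real.sin β ^ 2) :=
        Real.sqrt_pos.mpr hposq
      have hxeq : 1 - (Real.sin β / R) ^ 2 = (R ^ 2 - Real.sin β ^ 2) / R ^ 2 := by
        field_simp
      have hkey : Real.sqrt (1 - (Real.sin β / R) ^ 2)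
          = Real.sqrt (R ^ 2 - Real.sin β ^ 2) / R := by
        rw [hxeq, Real.sqrt_div hposq.le, Real.sqrt_sq hR0.le]
      have hsq : Real.sqrt (R ^ 2 - Real.sin β ^ 2) < Real.cos β := by
        have hlt : R ^ 2 - Real.sin β ^ 2 < Real.cos β ^ 2 := by
          nlinarith [Real.sin_sq_add_cos_sq β]
        calc Real.sqrt (R ^ 2 - Real.sin β ^ 2)
            < Real.sqrt (Real.cos β ^ 2) := Real.sqrt_lt_sqrt hposq.le hlt
          _ = Real.cos β := Real.sqrt_sq hcos.le
      have heq : 1 / Real.sqrt (1 - (Real.sin β / R) ^ 2) * (Real.cos β / R)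
          = Real.cos β / Real.sqrt (R ^ 2 - Real.sin β ^ 2) := by
        rw [hkey]; field_simp
      rw [heq]
      have : 1 < Real.cos β / Real.sqrt (R ^ 2 - Real.sin β ^ 2) :=
        (one_lt_div hsqrtpos).mpr hsq
      linarith
  refine ⟨hmono, ?_⟩
  intro β hβ
  have h0R : 0 ≤ Real.arcsin R := Real.arcsin_nonneg.mpr hR0.le
  have hmemL : -Real.arcsin R ∈ Set.Icc (-Real.arcsin R) (Real.arcsin R) :=
    ⟨le_refl _, by linarith⟩
  have hmemR : Real.arcsin R ∈ Set.Icc (-Real.arcsin R) (Real.arcsin R) :=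
    ⟨by linarith, le_refl _⟩
  have hfR : Real.arcsin (Real.sin (Real.arcsin R) / R) - Real.arcsin R
      = Real.arccos R := by
    rw [hsinarcsin, div_self (ne_of_gt hR0), Real.arcsin_one,
      Real.arccos_eq_pi_div_two_sub_arcsin]
  have hfL : Real.arcsin (Real.sin (-Real.arcsin R) / R) - (-Real.arcsin R)
      = -Real.arccos R := by
    rw [Real.sin_neg, hsinarcsin, neg_div, div_self (ne_of_gt hR0),
      Real.arcsin_neg, Real.arcsin_one, Real.arccos_eq_pi_div_two_sub_arcsin]
    ring
  have h1 := hmono.monotoneOn hmemL hβ hβ.1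
  have h2 := hmono.monotoneOn hβ hmemR hβ.2
  rw [hfL] at h1
  rw [hfR] at h2
  exact abs_le.mpr ⟨h1, h2⟩
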